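/- Let K be a compact zerodimensional space, f : K → 2^ω continuous, and μ a Radon probability measure on K that is not almost determined by closed cylinders. Then there exists a clopen set C ⊆ K and a closed set F ⊆ 2^ω such that μ(f⁻¹[F]) > 0, and for every closed G ⊆ F with μ(f⁻¹[G]) > 0 one has both μ(f⁻¹[G] ∩ C) > 0 and μ(f⁻¹[G] \ C) > 0. -/

import Mathlib

open MeasureTheory Set

theorem stmt8 {K : Type*} [TopologicalSpace K] [CompactSpace K] [T2Space K]
    [TotallyDisconnectedSpace K] [MeasurableSpace K] [BorelSpace K]
    (μ : Measure K) [IsProbabilityMeasure μ] [μ.Regular]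
    (f : K → (ℕ → Bool)) (hf : Continuous f)
    -- `μ` is NOT almost determined by closed cylinders:
    (hnotdet : ¬ ∀ U : Set K, IsClopen U →
      μ U = ⨆ (F : Set (ℕ → Bool)) (_ : IsClosed F) (_ : μ (f ⁻¹' F \ U) = 0),
        μ (f ⁻¹' F)) :
    ∃ C : Set K, IsClopen C ∧ ∃ F : Set (ℕ → Bool), IsClosed F ∧
      0 < μ (f ⁻¹' F) ∧
      ∀ G : Set (ℕ → Bool), G ⊆ F → IsClosed G → 0 < μ (f ⁻¹' G) →
        0 < μ (f ⁻¹' G ∩ C) ∧ 0 < μ (f ⁻¹' G \ C) := by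
  push_neg at hnotdet
  obtain ⟨U, hU, hne⟩ := hnotdet
  have hmf : Measurable f := hf.measurable
  have hUm : MeasurableSet U := hU.isClosed.measurableSet
  set lam₁ : Measure (ℕ → Bool) := (μ.restrict U).map f with hlam₁
  set lam₂ : Measure (ℕ → Bool) := (μ.restrict Uᶜ).map f with hlam₂
  have h1 : ∀ {G : Set (ℕ → Bool)}, MeasurableSet G → lam₁ G = μ (f ⁻¹' G ∩ U) := by
    intro G hG
    rw [hlam₁, Measure.map_apply hmf hG, Measure.restrict_apply (hmf hG)]
  have h2 : ∀ {G : Set (ℕ → Bool)}, MeasurableSet G → lam₂ G = μ (f ⁻¹' G \ U) := by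
    intro G hG
    rw [hlam₂, Measure.map_apply hmf hG, Measure.restrict_apply (hmf hG), diff_eq]
  have hUlam : lam₁ Set.univ = μ U := by
    rw [h1 MeasurableSet.univ, preimage_univ, univ_inter]
  -- the supremum is at most μ U
  set Ssup := ⨆ (F : Set (ℕ → Bool)) (_ : IsClosed F) (_ : μ (f ⁻¹' F \ U) = 0),
        μ (f ⁻¹' F) with hSsup
  have hsup_le : Ssup ≤ μ U := by
    refine iSup_le fun F => iSup_le fun hF => iSup_le fun h0 => ?_
    calc μ (f ⁻¹' F) ≤ μ (f ⁻¹' F ∩ U) + μ (f ⁻¹' F \ U) :=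
          measure_le_inter_add_diff μ _ _
      _ = μ (f ⁻¹' F ∩ U) := by rw [h0, add_zero]
      _ ≤ μ U := measure_mono inter_subset_right
  have hlt : Ssup < μ U := lt_of_le_of_ne hsup_le (Ne.symm hne)
  -- Lebesgue decomposition
  set σ := lam₁.singularPart lam₂ with hσ
  set ρ := lam₂.withDensity (lam₁.rnDeriv lam₂) with hρ
  have hdec : lam₁ = σ + ρ := lam₁.haveLebesgueDecomposition_add lam₂
  have hsing : σ ⟂ₘ lam₂ := Measure.mutuallySingular_singularPart lam₁ lam₂
  set σ' := lam₂.singularPart lam₁ with hσ'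
  set ρ' := lam₁.withDensity (lam₂.rnDeriv lam₁) with hρ'
  have hdec' : lam₂ = σ' + ρ' := lam₂.haveLebesgueDecomposition_add lam₁
  have hsing' : σ' ⟂ₘ lam₁ := Measure.mutuallySingular_singularPart lam₂ lam₁
  have hρac : ρ ≪ lam₂ := withDensity_absolutelyContinuous _ _
  have hρ'ac : ρ' ≪ lam₁ := withDensity_absolutelyContinuous _ _
  have hρle : ρ ≤ lam₁ := by rw [hdec]; exact Measure.le_add_left le_rfl
  have hρ'le : ρ' ≤ lam₂ := by rw [hdec']; exact Measure.le_add_left le_rfl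
  -- ρ is nonzero
  have hρpos : 0 < ρ Set.univ := by
    by_contra h
    push_neg at h
    have hρ0 : ρ Set.univ = 0 := le_antisymm h zero_le
    obtain ⟨S, hSm, hσS, hS2⟩ := hsing
    -- μ U ≤ Ssup, contradiction
    have hμU_le : μ U ≤ Ssup := by
      refine le_of_forall_lt fun r hr => ?_
      have hr1 : r < lam₁ Sᶜ := by
        have h11 : lam₁ Set.univ ≤ lam₁ S + lam₁ Sᶜ := by
          rw [← union_compl_self S] at *
          exact measure_union_le _ _
        have hS0 : lam₁ S = 0 := by
          have : lam₁ S ≤ σ S + ρ S := by rw [hdec]; rfl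
          have hρS : ρ S = 0 := le_antisymm ((measure_mono (subset_univ S)).trans hρ0.le) zero_le
          simpa [hσS, hρS] using this
        have : lam₁ Set.univ ≤ lam₁ Sᶜ := by simpa [hS0] using h11
        exact hr.trans_le (hUlam ▸ this)
      obtain ⟨T, hTsub, hTcomp, hTlt⟩ :=
        (Measure.InnerRegular.innerRegular (μ := lam₁)) hSm.compl r hr1
      have hTm : MeasurableSet T := hTcomp.isClosed.measurableSet
      have hT2 : μ (f ⁻¹' T \ U) = 0 := by
        rw [← h2 hTm]
        exact le_antisymm ((measure_mono hTsub).trans hS2.le) zero_le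
      have : r < μ (f ⁻¹' T) := hTlt.trans_le (by
        rw [h1 hTm]; exact measure_mono inter_subset_left)
      rw [hSsup]
      exact lt_iSup_iff.2 ⟨T, lt_iSup_iff.2 ⟨hTcomp.isClosed, lt_iSup_iff.2 ⟨hT2, this⟩⟩⟩
    exact absurd (le_antisymm hsup_le hμU_le) hne.symm
  -- the good set D
  obtain ⟨S₁, hS₁m, hσS₁, hlam₂S₁c⟩ := hsing
  obtain ⟨S₂, hS₂m, hσ'S₂, hlam₁S₂c⟩ := hsing'
  set D := S₁ ∩ S₂ with hD
  have hDm : MeasurableSet D := hS₁m.inter hS₂m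
  have hρDc : ρ Dᶜ = 0 := by
    have e1 : ρ S₁ᶜ = 0 := hρac hlam₂S₁c
    have e2 : ρ S₂ᶜ = 0 :=
      le_antisymm ((hρle S₂ᶜ).trans hlam₁S₂c.le) zero_le
    have : ρ Dᶜ ≤ ρ S₁ᶜ + ρ S₂ᶜ := by
      rw [hD, compl_inter]; exact measure_union_le _ _
    simpa [e1, e2] using this
  have hρD : 0 < ρ D := by
    have : ρ Set.univ ≤ ρ D + ρ Dᶜ := by
      rw [← union_compl_self D] at *; exact measure_union_le _ _
    rw [hρDc, add_zero] at this
    exact hρpos.trans_le this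
  have hlam₁D : 0 < lam₁ D := hρD.trans_le (hρle D)
  obtain ⟨F, hFsub, hFcomp, hFpos⟩ :=
    (Measure.InnerRegular.innerRegular (μ := lam₁)) hDm 0 hlam₁D
  have hFclosed : IsClosed F := hFcomp.isClosed
  have hFm : MeasurableSet F := hFclosed.measurableSet
  refine ⟨U, hU, F, hFclosed, ?_, ?_⟩
  · calc (0:ENNReal) < lam₁ F := hFpos
      _ = μ (f ⁻¹' F ∩ U) := h1 hFm
      _ ≤ μ (f ⁻¹' F) := measure_mono inter_subset_left
  · intro G hGF hGclosed hGpos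
    have hGm : MeasurableSet G := hGclosed.measurableSet
    have hGD : G ⊆ D := hGF.trans hFsub
    have hGeq₁ : lam₁ G = ρ G := by
      have hσG : σ G = 0 :=
        le_antisymm ((measure_mono (hGD.trans inter_subset_left)).trans hσS₁.le) zero_le
      have : lam₁ G = σ G + ρ G := by rw [hdec]; rfl
      rw [this, hσG, zero_add]
    have hGeq₂ : lam₂ G = ρ' G := by
      have hσ'G : σ' G = 0 :=
        le_antisymm ((measure_mono (hGD.trans inter_subset_right)).trans hσ'S₂.le) zero_le
      have : lam₂ G = σ' G + ρ' G := by rw [hdec']; rfl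
      rw [this, hσ'G, zero_add]
    have hsum : μ (f ⁻¹' G ∩ U) + μ (f ⁻¹' G \ U) = μ (f ⁻¹' G) :=
      measure_inter_add_diff _ hUm
    have h1G : lam₁ G ≠ 0 := by
      intro h0
      have hρ'G : ρ' G = 0 := hρ'ac h0
      have : μ (f ⁻¹' G) = 0 := by
        rw [← hsum, ← h1 hGm, ← h2 hGm, h0, hGeq₂, hρ'G, add_zero]
      exact hGpos.ne' this
    have h2G : lam₂ G ≠ 0 := by
      intro h0
      have hρG : ρ G = 0 := hρac h0
      have : μ (f ⁻¹' G) = 0 := by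
        rw [← hsum, ← h1 hGm, ← h2 hGm, h0, hGeq₁, hρG, add_zero]
      exact hGpos.ne' this
    constructor
    · rw [← h1 hGm]; exact pos_iff_ne_zero.2 h1G
    · rw [← h2 hGm]; exact pos_iff_ne_zero.2 h2G
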